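/- For d = 4, the expected Euler characteristic curve per site of the random cubical complex, f_4(p) = Σ_{k=0}^4 (-1)^k (4 choose k) (1 - (1-p)^(2^(4-k))), has exactly three zeros in the open interval (0,1). -/

import Mathlib

/-- The expected Euler characteristic curve per site of the `d`-dimensional random
cubical site-percolation model on the flat torus:
`f_d(p) = Σ_{k=0}^d (-1)^k (d choose k) (1 - (1-p)^(2^(d-k)))`. -/
noncomputable def cubicalECCurve (d : ℕ) (p : ℝ) : ℝ :=
  ∑ k ∈ Finset.range (d + 1),
    (-1 : ℝ) ^ k * (d.choose k) * (1 - (1 - p) ^ (2 ^ (d - k)))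

/-! ### Auxiliary development: the polynomial `hh t = t^15 - 4t^7 + 6t^3 - 4t + 1`
and its derivatives. For `t = 1 - p ∈ (0,1)`, we have
`cubicalECCurve 4 p = -(t * hh t)`, so the zeros correspond to zeros of `hh` in `(0,1)`. -/

noncomputable def hh (t : ℝ) : ℝ := t^15 - 4*t^7 + 6*t^3 - 4*t + 1
noncomputable def hh1 (t : ℝ) : ℝ := 15*t^14 - 28*t^6 + 18*t^2 - 4
noncomputable def hh2 (t : ℝ) : ℝ := t * (210*t^12 - 168*t^4 + 36)
noncomputable def hh3 (t : ℝ) : ℝ := 2730*t^12 - 840*t^4 + 36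

lemma curve_eq (p : ℝ) : cubicalECCurve 4 p = -((1-p) * hh (1-p)) := by
  simp [cubicalECCurve, hh, Finset.sum_range_succ, show Nat.choose 4 2 = 6 from rfl]
  norm_num
  ring


lemma hasDerivAt_hh (t : ℝ) : HasDerivAt hh (hh1 t) t := by
  have h : HasDerivAt hh (((15:ℕ):ℝ) * t ^ (15-1) - 4*(((7:ℕ):ℝ) * t ^ (7-1))
      + 6*(((3:ℕ):ℝ) * t ^ (3-1)) - 4*1) t :=
    ((((hasDerivAt_pow 15 t).sub ((hasDerivAt_pow 7 t).const_mul 4)).add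
      ((hasDerivAt_pow 3 t).const_mul 6)).sub ((hasDerivAt_id t).const_mul 4)).add_const 1
  convert h using 1
  unfold hh1; push_cast; ring

lemma hasDerivAt_hh1 (t : ℝ) : HasDerivAt hh1 (hh2 t) t := by
  have h : HasDerivAt hh1 (15*(((14:ℕ):ℝ) * t ^ (14-1)) - 28*(((6:ℕ):ℝ) * t ^ (6-1))
      + 18*(((2:ℕ):ℝ) * t ^ (2-1))) t :=
    (((hasDerivAt_pow 14 t).const_mul 15).sub ((hasDerivAt_pow 6 t).const_mul 28)).add
      ((hasDerivAt_pow 2 t).const_mul 18) |>.sub_const 4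
  convert h using 1
  unfold hh2; norm_num; ring

lemma hasDerivAt_hh2 (t : ℝ) : HasDerivAt hh2 (hh3 t) t := by
  have h : HasDerivAt (fun x : ℝ => x^13*210 - x^5*168 + x*36)
      ((((13:ℕ):ℝ) * t ^ (13-1))*210 - (((5:ℕ):ℝ) * t ^ (5-1))*168 + 1*36) t :=
    (((hasDerivAt_pow 13 t).mul_const 210).sub ((hasDerivAt_pow 5 t).mul_const 168)).add
      ((hasDerivAt_id t).mul_const 36)
  have h' : HasDerivAt hh2 ((((13:ℕ):ℝ) * t ^ (13-1))*210 - (((5:ℕ):ℝ) * t ^ (5-1))*168 + 1*36) t := by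
    convert h using 2 with x
    unfold hh2; ring
  convert h' using 1
  unfold hh3; norm_num; ring

lemma cont_hh : Continuous hh := by unfold hh; fun_prop
lemma cont_hh1 : Continuous hh1 := by unfold hh1; fun_prop



-- region (0, 1/4] : hh > 0
lemma hh_pos_low {t : ℝ} (h0 : 0 < t) (h4 : t ≤ 1/4) : 0 < hh t := by
  have h1 : t^4 ≤ (1/4:ℝ)^4 := pow_le_pow_left₀ h0.le h4 4
  have h2 : (0:ℝ) < t^3 := pow_pos h0 3
  have h3 : (0:ℝ) < t^15 := pow_pos h0 15
  have h5 : 0 < t^3 * (6 - 4*t^4) := mul_pos h2 (by nlinarith)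
  unfold hh; nlinarith

-- I1 = [1/4, 3/10] : strictly decreasing
lemma hh_anti_I1 : StrictAntiOn hh (Set.Icc (1/4 : ℝ) (3/10)) := by
  apply strictAntiOn_of_deriv_neg (convex_Icc _ _) cont_hh.continuousOn
  intro x hx
  rw [interior_Icc] at hx
  rw [(hasDerivAt_hh x).deriv]
  obtain ⟨ha, hb⟩ := hx
  have h0 : (0:ℝ) ≤ x := by linarith
  have e1 : x^14 ≤ (3/10:ℝ)^14 := pow_le_pow_left₀ h0 hb.le 14
  have e2 : x^2 ≤ (3/10:ℝ)^2 := pow_le_pow_left₀ h0 hb.le 2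
  have e3 : (0:ℝ) ≤ x^6 := pow_nonneg h0 6
  unfold hh1; nlinarith

-- R2 = [3/10, 13/20] : hh2 > 0 hence hh convex there
lemma hh2_pos_R2 {x : ℝ} (ha : 3/10 ≤ x) (hb : x ≤ 13/20) : 0 < hh2 x := by
  have h0 : (0:ℝ) < x := by linarith
  have hx13 : (0:ℝ) ≤ x^13 := pow_nonneg h0.le 13
  unfold hh2
  have : 0 < 210*x^12 - 168*x^4 + 36 := by
    rcases le_or_gt x (1/2) with h | h
    · have e1 : x^4 ≤ (1/2:ℝ)^4 := pow_le_pow_left₀ h0.le h 4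
      have e2 : (0:ℝ) ≤ x^12 := pow_nonneg h0.le 12
      nlinarith
    · rcases le_or_gt x (3/5) with h' | h'
      · have e1 : x^4 ≤ (3/5:ℝ)^4 := pow_le_pow_left₀ h0.le h' 4
        have e2 : (0:ℝ) ≤ x^12 := pow_nonneg h0.le 12
        nlinarith
      · have e1 : x^4 ≤ (13/20:ℝ)^4 := pow_le_pow_left₀ h0.le hb 4
        have e2 : (3/5:ℝ)^12 ≤ x^12 := pow_le_pow_left₀ (by norm_num) h'.le 12
        nlinarith
  positivity

lemma hh_convexOn_R2 : ConvexOn ℝ (Set.Icc (3/10 : ℝ) (13/20)) hh := by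
  apply convexOn_of_hasDerivWithinAt2_nonneg (convex_Icc _ _) cont_hh.continuousOn
    (fun x _ => (hasDerivAt_hh x).hasDerivWithinAt)
    (fun x _ => (hasDerivAt_hh1 x).hasDerivWithinAt)
  intro x hx
  rw [interior_Icc] at hx
  exact (hh2_pos_R2 hx.1.le hx.2.le).le

lemma hh_neg_R2 {t : ℝ} (ht : t ∈ Set.Icc (3/10 : ℝ) (13/20)) : hh t < 0 := by
  have h := hh_convexOn_R2.le_on_segment (x := 3/10) (y := 13/20)
    (by constructor <;> norm_num) (by constructor <;> norm_num)
    (by rw [segment_eq_Icc (by norm_num : (3/10:ℝ) ≤ 13/20)]; exact ht)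
  have e1 : hh (3/10) < 0 := by unfold hh; norm_num
  have e2 : hh (13/20) < 0 := by unfold hh; norm_num
  calc hh t ≤ max (hh (3/10)) (hh (13/20)) := h
    _ < 0 := max_lt e1 e2



-- I2 = [13/20, 3/4] : hh3 < 0, so hh1 concave, so hh1 >= min endpoints > 0, hh strictly mono
lemma hh3_neg_I2 {x : ℝ} (ha : 13/20 ≤ x) (hb : x ≤ 3/4) : hh3 x < 0 := by
  have h0 : (0:ℝ) ≤ x := by linarith
  have e1 : x^12 ≤ (3/4:ℝ)^12 := pow_le_pow_left₀ h0 hb 12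
  have e2 : (13/20:ℝ)^4 ≤ x^4 := pow_le_pow_left₀ (by norm_num) ha 4
  unfold hh3; nlinarith

lemma hh1_concaveOn_I2 : ConcaveOn ℝ (Set.Icc (13/20 : ℝ) (3/4)) hh1 := by
  apply concaveOn_of_hasDerivWithinAt2_nonpos (convex_Icc _ _) cont_hh1.continuousOn
    (fun x _ => (hasDerivAt_hh1 x).hasDerivWithinAt)
    (fun x _ => (hasDerivAt_hh2 x).hasDerivWithinAt)
  intro x hx
  rw [interior_Icc] at hx
  exact (hh3_neg_I2 hx.1.le hx.2.le).le

lemma hh1_pos_I2 {x : ℝ} (hx : x ∈ Set.Icc (13/20 : ℝ) (3/4)) : 0 < hh1 x := by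
  have h := hh1_concaveOn_I2.ge_on_segment (x := 13/20) (y := 3/4)
    (by constructor <;> norm_num) (by constructor <;> norm_num)
    (by rw [segment_eq_Icc (by norm_num : (13/20:ℝ) ≤ 3/4)]; exact hx)
  have e1 : 0 < hh1 (13/20) := by unfold hh1; norm_num
  have e2 : 0 < hh1 (3/4) := by unfold hh1; norm_num
  calc (0:ℝ) < min (hh1 (13/20)) (hh1 (3/4)) := lt_min e1 e2
    _ ≤ hh1 x := h

lemma hh_mono_I2 : StrictMonoOn hh (Set.Icc (13/20 : ℝ) (3/4)) := by
  apply strictMonoOn_of_deriv_pos (convex_Icc _ _) cont_hh.continuousOn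
  intro x hx
  rw [interior_Icc] at hx
  rw [(hasDerivAt_hh x).deriv]
  exact hh1_pos_I2 ⟨hx.1.le, hx.2.le⟩

-- R5 = [3/4, 23/25] : hh2 < 0, hh concave, hh >= min endpoints > 0
lemma hh2_neg_R5 {x : ℝ} (ha : 3/4 ≤ x) (hb : x ≤ 23/25) : hh2 x < 0 := by
  have h0 : (0:ℝ) < x := by linarith
  have hneg : 210*x^12 - 168*x^4 + 36 < 0 := by
    rcases le_or_gt x (4/5) with h | h
    · have e1 : x^12 ≤ (4/5:ℝ)^12 := pow_le_pow_left₀ h0.le h 12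
      have e2 : (3/4:ℝ)^4 ≤ x^4 := pow_le_pow_left₀ (by norm_num) ha 4
      nlinarith
    · rcases le_or_gt x (17/20) with h' | h'
      · have e1 : x^12 ≤ (17/20:ℝ)^12 := pow_le_pow_left₀ h0.le h' 12
        have e2 : (4/5:ℝ)^4 ≤ x^4 := pow_le_pow_left₀ (by norm_num) h.le 4
        nlinarith
      · rcases le_or_gt x (7/8) with h'' | h''
        · have e1 : x^12 ≤ (7/8:ℝ)^12 := pow_le_pow_left₀ h0.le h'' 12
          have e2 : (17/20:ℝ)^4 ≤ x^4 := pow_le_pow_left₀ (by norm_num) h'.le 4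
          nlinarith
        · rcases le_or_gt x (9/10) with h3 | h3
          · have e1 : x^12 ≤ (9/10:ℝ)^12 := pow_le_pow_left₀ h0.le h3 12
            have e2 : (7/8:ℝ)^4 ≤ x^4 := pow_le_pow_left₀ (by norm_num) h''.le 4
            nlinarith
          · rcases le_or_gt x (91/100) with h4 | h4
            · have e1 : x^12 ≤ (91/100:ℝ)^12 := pow_le_pow_left₀ h0.le h4 12
              have e2 : (9/10:ℝ)^4 ≤ x^4 := pow_le_pow_left₀ (by norm_num) h3.le 4
              nlinarith
            · have e1 : x^12 ≤ (23/25:ℝ)^12 := pow_le_pow_left₀ h0.le hb 12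
              have e2 : (91/100:ℝ)^4 ≤ x^4 := pow_le_pow_left₀ (by norm_num) h4.le 4
              nlinarith
  unfold hh2; nlinarith

lemma hh_concaveOn_R5 : ConcaveOn ℝ (Set.Icc (3/4 : ℝ) (23/25)) hh := by
  apply concaveOn_of_hasDerivWithinAt2_nonpos (convex_Icc _ _) cont_hh.continuousOn
    (fun x _ => (hasDerivAt_hh x).hasDerivWithinAt)
    (fun x _ => (hasDerivAt_hh1 x).hasDerivWithinAt)
  intro x hx
  rw [interior_Icc] at hx
  exact (hh2_neg_R5 hx.1.le hx.2.le).le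

lemma hh_pos_R5 {t : ℝ} (ht : t ∈ Set.Icc (3/4 : ℝ) (23/25)) : 0 < hh t := by
  have h := hh_concaveOn_R5.ge_on_segment (x := 3/4) (y := 23/25)
    (by constructor <;> norm_num) (by constructor <;> norm_num)
    (by rw [segment_eq_Icc (by norm_num : (3/4:ℝ) ≤ 23/25)]; exact ht)
  have e1 : 0 < hh (3/4) := by unfold hh; norm_num
  have e2 : 0 < hh (23/25) := by unfold hh; norm_num
  calc (0:ℝ) < min (hh (3/4)) (hh (23/25)) := lt_min e1 e2
    _ ≤ hh t := h



-- R6 = [23/25, 24/25] : hh3 > 0, hh1 convex, hh1 <= max endpoints < 0, hh strictly anti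
lemma hh3_pos_R6 {x : ℝ} (ha : 23/25 ≤ x) (hb : x ≤ 24/25) : 0 < hh3 x := by
  have e1 : (23/25:ℝ)^12 ≤ x^12 := pow_le_pow_left₀ (by norm_num) ha 12
  have e2 : x^4 ≤ (24/25:ℝ)^4 := pow_le_pow_left₀ (by linarith) hb 4
  unfold hh3; nlinarith

lemma hh1_convexOn_R6 : ConvexOn ℝ (Set.Icc (23/25 : ℝ) (24/25)) hh1 := by
  apply convexOn_of_hasDerivWithinAt2_nonneg (convex_Icc _ _) cont_hh1.continuousOn
    (fun x _ => (hasDerivAt_hh1 x).hasDerivWithinAt)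
    (fun x _ => (hasDerivAt_hh2 x).hasDerivWithinAt)
  intro x hx
  rw [interior_Icc] at hx
  exact (hh3_pos_R6 hx.1.le hx.2.le).le

lemma hh1_neg_R6 {x : ℝ} (hx : x ∈ Set.Icc (23/25 : ℝ) (24/25)) : hh1 x < 0 := by
  have h := hh1_convexOn_R6.le_on_segment (x := 23/25) (y := 24/25)
    (by constructor <;> norm_num) (by constructor <;> norm_num)
    (by rw [segment_eq_Icc (by norm_num : (23/25:ℝ) ≤ 24/25)]; exact hx)
  have e1 : hh1 (23/25) < 0 := by unfold hh1; norm_num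
  have e2 : hh1 (24/25) < 0 := by unfold hh1; norm_num
  calc hh1 x ≤ max (hh1 (23/25)) (hh1 (24/25)) := h
    _ < 0 := max_lt e1 e2

lemma hh_anti_R6 : StrictAntiOn hh (Set.Icc (23/25 : ℝ) (24/25)) := by
  apply strictAntiOn_of_deriv_neg (convex_Icc _ _) cont_hh.continuousOn
  intro x hx
  rw [interior_Icc] at hx
  rw [(hasDerivAt_hh x).deriv]
  exact hh1_neg_R6 ⟨hx.1.le, hx.2.le⟩

lemma hh_pos_R6 {t : ℝ} (ht : t ∈ Set.Icc (23/25 : ℝ) (24/25)) : 0 < hh t := by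
  have e2 : 0 < hh (24/25) := by unfold hh; norm_num
  rcases eq_or_lt_of_le ht.2 with h | h
  · rw [h]; exact e2
  · have := hh_anti_R6 ht (by constructor <;> norm_num) h
    linarith

-- I3 = [24/25, 97/100] : hh2 > 0, hh convex
lemma hh2_pos_I3 {x : ℝ} (ha : 24/25 ≤ x) (hb : x ≤ 97/100) : 0 < hh2 x := by
  have h0 : (0:ℝ) < x := by linarith
  have e1 : (24/25:ℝ)^12 ≤ x^12 := pow_le_pow_left₀ (by norm_num) ha 12
  have e2 : x^4 ≤ (97/100:ℝ)^4 := pow_le_pow_left₀ h0.le hb 4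
  have hinner : 0 < 210*x^12 - 168*x^4 + 36 := by nlinarith
  unfold hh2; exact mul_pos h0 hinner

lemma hh2_pos_R8 {x : ℝ} (ha : 97/100 ≤ x) (hb : x ≤ 1) : 0 < hh2 x := by
  have h0 : (0:ℝ) < x := by linarith
  have e1 : (97/100:ℝ)^12 ≤ x^12 := pow_le_pow_left₀ (by norm_num) ha 12
  have e2 : x^4 ≤ (1:ℝ)^4 := pow_le_pow_left₀ h0.le hb 4
  have hinner : 0 < 210*x^12 - 168*x^4 + 36 := by nlinarith
  unfold hh2; exact mul_pos h0 hinner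

lemma hh_convexOn_I3 : ConvexOn ℝ (Set.Icc (24/25 : ℝ) (97/100)) hh := by
  apply convexOn_of_hasDerivWithinAt2_nonneg (convex_Icc _ _) cont_hh.continuousOn
    (fun x _ => (hasDerivAt_hh x).hasDerivWithinAt)
    (fun x _ => (hasDerivAt_hh1 x).hasDerivWithinAt)
  intro x hx
  rw [interior_Icc] at hx
  exact (hh2_pos_I3 hx.1.le hx.2.le).le

lemma hh_convexOn_R8 : ConvexOn ℝ (Set.Icc (97/100 : ℝ) 1) hh := by
  apply convexOn_of_hasDerivWithinAt2_nonneg (convex_Icc _ _) cont_hh.continuousOn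
    (fun x _ => (hasDerivAt_hh x).hasDerivWithinAt)
    (fun x _ => (hasDerivAt_hh1 x).hasDerivWithinAt)
  intro x hx
  rw [interior_Icc] at hx
  exact (hh2_pos_R8 hx.1.le hx.2.le).le

-- uniqueness of root in I3 via convexity
lemma hh_uniq_I3 {x y : ℝ} (hx : x ∈ Set.Icc (24/25 : ℝ) (97/100))
    (hy : y ∈ Set.Icc (24/25 : ℝ) (97/100)) (hx0 : hh x = 0) (hy0 : hh y = 0) : x = y := by
  have h97 : hh (97/100) < 0 := by unfold hh; norm_num
  have key : ∀ u v : ℝ, u ∈ Set.Icc (24/25 : ℝ) (97/100) → v ∈ Set.Icc (24/25 : ℝ) (97/100) →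
      hh u = 0 → hh v = 0 → u < v → False := by
    intro u v hu hv hu0 hv0 huv
    have hv97 : v < 97/100 := lt_of_le_of_ne hv.2 (fun h => by rw [h] at hv0; linarith)
    have hzu : (0:ℝ) < 97/100 - u := by linarith [lt_of_lt_of_le huv hv.2]
    have ha : 0 < (97/100 - v)/(97/100 - u) := div_pos (by linarith) hzu
    have hb : 0 < (v - u)/(97/100 - u) := div_pos (by linarith) hzu
    have hab : (97/100 - v)/(97/100 - u) + (v - u)/(97/100 - u) = 1 := by
      rw [← add_div, div_eq_one_iff_eq hzu.ne']; ring
    have hmem : (97/100:ℝ) ∈ Set.Icc (24/25:ℝ) (97/100) := by constructor <;> norm_num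
    have hcx := hh_convexOn_I3.2 hu hmem ha.le hb.le hab
    simp only [smul_eq_mul] at hcx
    have hcomb : (97/100 - v)/(97/100 - u) * u + (v - u)/(97/100 - u) * (97/100) = v := by
      rw [div_mul_eq_mul_div, div_mul_eq_mul_div, ← add_div, div_eq_iff hzu.ne']; ring
    rw [hcomb, hu0, hv0] at hcx
    nlinarith
  rcases lt_trichotomy x y with h | h | h
  · exact absurd (key x y hx hy hx0 hy0 h) not_false
  · exact h
  · exact absurd (key y x hy hx hy0 hx0 h) not_false

-- R8 : hh < 0 on [97/100, 1)
lemma hh_neg_R8 {t : ℝ} (ha : 97/100 ≤ t) (hb : t < 1) : hh t < 0 := by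
  have h97 : hh (97/100) < 0 := by unfold hh; norm_num
  have h1 : hh 1 = 0 := by unfold hh; norm_num
  have ha' : 0 < (1 - t)/(1 - 97/100 : ℝ) := div_pos (by linarith) (by norm_num)
  have hb' : 0 ≤ (t - 97/100)/(1 - 97/100 : ℝ) := div_nonneg (by linarith) (by norm_num)
  have hab : (1 - t)/(1 - 97/100 : ℝ) + (t - 97/100)/(1 - 97/100 : ℝ) = 1 := by norm_num; ring
  have hcx := hh_convexOn_R8.2 (by constructor <;> norm_num : (97/100:ℝ) ∈ Set.Icc (97/100:ℝ) 1)
    (by constructor <;> norm_num : (1:ℝ) ∈ Set.Icc (97/100:ℝ) 1) ha'.le hb' hab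
  simp only [smul_eq_mul] at hcx
  have hcomb : (1 - t)/(1 - 97/100 : ℝ) * (97/100) + (t - 97/100)/(1 - 97/100 : ℝ) * 1 = t := by
    norm_num; ring
  rw [hcomb, h1] at hcx
  nlinarith


/-! ### Existence of the three roots -/

lemma exists_r1 : ∃ r ∈ Set.Ioo (1/4:ℝ) (3/10), hh r = 0 := by
  have h0 : (0:ℝ) ∈ Set.Ioo (hh (3/10)) (hh (1/4)) := by
    constructor <;> (unfold hh; norm_num)
  have := intermediate_value_Ioo' (by norm_num : (1/4:ℝ) ≤ 3/10) cont_hh.continuousOn h0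
  obtain ⟨r, hr, hr0⟩ := this
  exact ⟨r, hr, hr0⟩

lemma exists_r2 : ∃ r ∈ Set.Ioo (13/20:ℝ) (3/4), hh r = 0 := by
  have h0 : (0:ℝ) ∈ Set.Ioo (hh (13/20)) (hh (3/4)) := by
    constructor <;> (unfold hh; norm_num)
  have := intermediate_value_Ioo (by norm_num : (13/20:ℝ) ≤ 3/4) cont_hh.continuousOn h0
  obtain ⟨r, hr, hr0⟩ := this
  exact ⟨r, hr, hr0⟩

lemma exists_r3 : ∃ r ∈ Set.Ioo (24/25:ℝ) (97/100), hh r = 0 := by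
  have h0 : (0:ℝ) ∈ Set.Ioo (hh (97/100)) (hh (24/25)) := by
    constructor <;> (unfold hh; norm_num)
  have := intermediate_value_Ioo' (by norm_num : (24/25:ℝ) ≤ 97/100) cont_hh.continuousOn h0
  obtain ⟨r, hr, hr0⟩ := this
  exact ⟨r, hr, hr0⟩

/-- For `d = 4`, the expected Euler characteristic curve per site of the random
cubical complex has exactly three zeros in the open interval `(0,1)`. -/
theorem cubical_ec_curve_zeros_dim_four :
    {p : ℝ | p ∈ Set.Ioo (0 : ℝ) 1 ∧ cubicalECCurve 4 p = 0}.encard = 3 := by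
  rw [Set.encard_eq_three]
  obtain ⟨r1, hr1, hr1z⟩ := exists_r1
  obtain ⟨r2, hr2, hr2z⟩ := exists_r2
  obtain ⟨r3, hr3, hr3z⟩ := exists_r3
  obtain ⟨hr1a, hr1b⟩ := hr1
  obtain ⟨hr2a, hr2b⟩ := hr2
  obtain ⟨hr3a, hr3b⟩ := hr3
  refine ⟨1 - r3, 1 - r2, 1 - r1, by intro h; linarith, by intro h; linarith,
    by intro h; linarith, ?_⟩
  ext p
  simp only [Set.mem_setOf_eq, Set.mem_insert_iff, Set.mem_singleton_iff]
  constructor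
  · rintro ⟨⟨hp0, hp1⟩, hz⟩
    have h1p : (0:ℝ) < 1 - p := by linarith
    have ht : hh (1-p) = 0 := by
      rw [curve_eq, neg_eq_zero] at hz
      rcases mul_eq_zero.mp hz with h | h
      · exact absurd h h1p.ne'
      · exact h
    have ht1 : 1 - p < 1 := by linarith
    rcases le_or_gt (1-p) (1/4) with h | h
    · exact absurd ht (hh_pos_low h1p h).ne'
    rcases le_or_gt (1-p) (3/10) with h2 | h2
    · have : 1 - p = r1 := hh_anti_I1.injOn ⟨h.le, h2⟩ ⟨hr1a.le, hr1b.le⟩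
        (ht.trans hr1z.symm)
      right; right; linarith
    rcases le_or_gt (1-p) (13/20) with h3 | h3
    · exact absurd ht (hh_neg_R2 ⟨h2.le, h3⟩).ne
    rcases le_or_gt (1-p) (3/4) with h4 | h4
    · have : 1 - p = r2 := hh_mono_I2.injOn ⟨h3.le, h4⟩ ⟨hr2a.le, hr2b.le⟩
        (ht.trans hr2z.symm)
      right; left; linarith
    rcases le_or_gt (1-p) (23/25) with h5 | h5
    · exact absurd ht (hh_pos_R5 ⟨h4.le, h5⟩).ne'
    rcases le_or_gt (1-p) (24/25) with h6 | h6
    · exact absurd ht (hh_pos_R6 ⟨h5.le, h6⟩).ne'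
    rcases le_or_gt (1-p) (97/100) with h7 | h7
    · have : 1 - p = r3 := hh_uniq_I3 ⟨h6.le, h7⟩ ⟨hr3a.le, hr3b.le⟩ ht hr3z
      left; linarith
    · exact absurd ht (hh_neg_R8 h7.le ht1).ne
  · intro hp
    have key : ∀ r : ℝ, 0 < r → r < 1 → hh r = 0 → p = 1 - r →
        (p ∈ Set.Ioo (0:ℝ) 1 ∧ cubicalECCurve 4 p = 0) := by
      intro r h0 h1 hz hpr
      refine ⟨⟨by rw [hpr]; linarith, by rw [hpr]; linarith⟩, ?_⟩
      rw [hpr, curve_eq, show (1:ℝ) - (1 - r) = r by ring, hz, mul_zero, neg_zero]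
    rcases hp with h | h | h
    · exact key r3 (by linarith) (by linarith) hr3z h
    · exact key r2 (by linarith) (by linarith) hr2z h
    · exact key r1 (by linarith) (by linarith) hr1z h
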